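/- Let V be a nonempty finite set, let k : V → ℕ satisfy k(v) ≥ 1 for all v, let d : V × V → ℕ, let ℓ = ∑_{v∈V} k(v), and let c ∈ ℕ. Then there exists a cyclic sequence x : ℤ/ℓℤ → V in which every v ∈ V appears exactly k(v) times and ∑_{i∈ℤ/ℓℤ} d(x(i), x(i+1)) = c, if and only if there exists a multiplicity function m : V × V → ℕ such that for every v ∈ V, ∑_{w} m(v,w) = ∑_{w} m(w,v) = k(v), the undirected support graph of m is connected on all of V, and ∑_{(u,v)} d(u,v)·m(u,v) = c. -/

import Mathlib

variable {V : Type*} [Fintype V] [DecidableEq V]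

/-- The undirected support graph of a multiplicity function `m` : distinct `u`, `v` are
adjacent iff `m (u,v) + m (v,u) ≥ 1`. -/
def supportGraph (m : V × V → ℕ) : SimpleGraph V where
  Adj u v := u ≠ v ∧ 1 ≤ m (u, v) + m (v, u)
  symm := by
    constructor
    intro u v h
    exact ⟨h.1.symm, by omega⟩
  loopless := by
    constructor
    intro v h
    exact h.1 rfl

set_option linter.unusedSectionVars false

namespace TourAux

/-- cyclic adjacent pairs of a list -/
def cpairs (L : List V) : List (V × V) := L.zip (L.rotate 1)

/-- multiplicity function of a cyclic list -/
def cnt (L : List V) : V × V → ℕ := fun p => (cpairs L).count p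

@[simp] lemma length_cpairs (L : List V) : (cpairs L).length = L.length := by
  simp [cpairs]

lemma getElem_cpairs (L : List V) (i : ℕ) (h : i < L.length) :
    (cpairs L)[i]'(by simpa using h) = (L[i], L[(i + 1) % L.length]'(Nat.mod_lt _ (by omega))) := by
  have h1 : i < (L.rotate 1).length := by simpa using h
  show (L.zip (L.rotate 1))[i]'(by simp [cpairs] at h ⊢; omega) = _
  rw [List.getElem_zip]
  congr 1
  rw [List.getElem_rotate]

lemma cpairs_rotate (L : List V) (n : ℕ) : cpairs (L.rotate n) = (cpairs L).rotate n := by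
  apply List.ext_getElem
  · simp
  · intro i h1 h2
    have hi : i < L.length := by simpa using h1
    have hpos : 0 < L.length := by omega
    have hrl : (L.rotate n).length = L.length := by simp
    rw [List.getElem_rotate (cpairs L) n i,
      getElem_cpairs L ((i + n) % (cpairs L).length) (by simpa using Nat.mod_lt (i+n) hpos),
      getElem_cpairs (L.rotate n) i (by simpa using hi)]
    rw [List.getElem_rotate, List.getElem_rotate]
    have e1 : ((i + 1) % (L.rotate n).length + n) % L.length = ((i + n) % L.length + 1) % L.length := by
      rw [hrl, Nat.mod_add_mod, Nat.mod_add_mod, Nat.add_right_comm]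
    simp only [length_cpairs, hrl] at e1 ⊢
    congr 2

lemma cnt_rotate (L : List V) (n : ℕ) : cnt (L.rotate n) = cnt L := by
  funext p
  simp only [cnt, cpairs_rotate]
  have h := List.Perm.countP_eq (fun q => q == p) ((cpairs L).rotate_perm n)
  simpa [List.count] using h

lemma cpairs_cons (a : V) (A : List V) : cpairs (a :: A) = (a :: A).zip (A ++ [a]) := by
  simp [cpairs, List.rotate_cons_succ]

lemma cnt_splice (a : V) (A B : List V) :
    cnt ((a :: A) ++ (a :: B)) = fun p => cnt (a :: A) p + cnt (a :: B) p := by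
  funext p
  have key : cpairs ((a :: A) ++ (a :: B)) = cpairs (a :: A) ++ cpairs (a :: B) := by
    have h1 : (a :: A) ++ (a :: B) = a :: (A ++ a :: B) := by simp
    rw [h1, cpairs_cons, cpairs_cons, cpairs_cons]
    have h2 : (A ++ a :: B) ++ [a] = (A ++ [a]) ++ (B ++ [a]) := by simp
    rw [h2, ← List.zip_append (by simp)]
    simp
  simp only [cnt]
  rw [key, List.count_append]


lemma sum_count_fst (l : List (V × V)) (v : V) :
    ∑ w : V, l.count (v, w) = (l.map Prod.fst).count v := by
  induction l with
  | nil => simp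
  | cons a t ih =>
    simp only [List.count_cons, List.map_cons, Finset.sum_add_distrib, ih]
    congr 1
    rcases a with ⟨a1, a2⟩
    by_cases h : a1 = v
    · subst h
      rw [Finset.sum_eq_single a2]
      · simp
      · intro b _ hb
        simp [Prod.ext_iff, Ne.symm hb]
      · simp
    · rw [Finset.sum_eq_zero]
      · simp [beq_iff_eq, h]
      · intro b _
        simp [Prod.ext_iff, h]

lemma sum_count_snd (l : List (V × V)) (v : V) :
    ∑ w : V, l.count (w, v) = (l.map Prod.snd).count v := by
  induction l with
  | nil => simp
  | cons a t ih =>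
    simp only [List.count_cons, List.map_cons, Finset.sum_add_distrib, ih]
    congr 1
    rcases a with ⟨a1, a2⟩
    by_cases h : a2 = v
    · subst h
      rw [Finset.sum_eq_single a1]
      · simp
      · intro b _ hb
        simp [Prod.ext_iff, Ne.symm hb]
      · simp
    · rw [Finset.sum_eq_zero]
      · simp [beq_iff_eq, h]
      · intro b _
        simp [Prod.ext_iff, h]

lemma sum_count_univ {α : Type*} [Fintype α] [DecidableEq α] (l : List α) :
    ∑ a : α, l.count a = l.length := by
  induction l with
  | nil => simp
  | cons b t ih =>
    simp only [List.count_cons, Finset.sum_add_distrib, ih, List.length_cons]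
    congr 1
    rw [Finset.sum_eq_single b]
    · simp
    · intro x _ hx
      simp [Ne.symm hx]
    · simp

/-- count = card of matching indices, getD form -/
lemma count_eq_card_filter_getD {α : Type*} [DecidableEq α] (l : List α) (dflt : α) (v : α) :
    l.count v = ((Finset.range l.length).filter (fun i => l.getD i dflt = v)).card := by
  induction l with
  | nil => simp
  | cons b t ih =>
    rw [Finset.card_filter, List.length_cons, Finset.sum_range_succ']
    simp only [List.getD_cons_succ, List.getD_cons_zero, List.count_cons, ← Finset.card_filter, ← ih]
    by_cases h : b = v <;> simp [beq_iff_eq, h]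

lemma sum_getD_map {α β : Type*} [AddCommMonoid β] (l : List α) (dflt : α) (f : α → β) :
    ∑ i ∈ Finset.range l.length, f (l.getD i dflt) = (l.map f).sum := by
  induction l with
  | nil => simp
  | cons b t ih =>
    rw [List.length_cons, Finset.sum_range_succ']
    simp only [List.getD_cons_succ, List.getD_cons_zero, ih, List.map_cons, List.sum_cons]
    exact add_comm _ _

lemma sum_count_mul {α : Type*} [Fintype α] [DecidableEq α] (l : List α) (f : α → ℕ) :
    ∑ a : α, f a * l.count a = (l.map f).sum := by
  rw [Finset.sum_list_map_count l f]
  rw [← Finset.sum_subset (Finset.subset_univ l.toFinset)]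
  · simp [mul_comm]
  · intro x _ hx
    simp [List.count_eq_zero_of_not_mem (by simpa using hx)]


end TourAux
namespace TourAux

lemma map_fst_cpairs (L : List V) : (cpairs L).map Prod.fst = L := by
  simp [cpairs, List.map_fst_zip (by simp : L.length ≤ (L.rotate 1).length)]

lemma map_snd_cpairs (L : List V) : (cpairs L).map Prod.snd = L.rotate 1 := by
  simp [cpairs, List.map_snd_zip (by simp : (L.rotate 1).length ≤ L.length)]

lemma cnt_out (L : List V) (v : V) : ∑ w : V, cnt L (v, w) = L.count v := by
  rw [show (∑ w : V, cnt L (v, w)) = ∑ w : V, (cpairs L).count (v, w) from rfl,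
    sum_count_fst, map_fst_cpairs]

lemma cnt_in (L : List V) (v : V) : ∑ w : V, cnt L (w, v) = L.count v := by
  rw [show (∑ w : V, cnt L (w, v)) = ∑ w : V, (cpairs L).count (w, v) from rfl,
    sum_count_snd, map_snd_cpairs]
  exact (L.rotate_perm 1).count_eq v

lemma cnt_total (L : List V) : ∑ p : V × V, cnt L p = L.length := by
  rw [Fintype.sum_prod_type]
  rw [Finset.sum_congr rfl (fun v _ => cnt_out L v)]
  exact sum_count_univ L

lemma mem_of_cnt_pos (L : List V) (p : V × V) (h : 1 ≤ cnt L p) :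
    p.1 ∈ L ∧ p.2 ∈ L := by
  have hm : p ∈ cpairs L := by
    by_contra hc
    simp [cnt, List.count_eq_zero_of_not_mem hc] at h
  constructor
  · have : p.1 ∈ (cpairs L).map Prod.fst := List.mem_map_of_mem hm
    rwa [map_fst_cpairs] at this
  · have : p.2 ∈ (cpairs L).map Prod.snd := List.mem_map_of_mem hm
    rw [map_snd_cpairs] at this
    exact ((L.rotate_perm 1).mem_iff).1 this

lemma getElem_idx_congr (L : List V) {i j : ℕ} (h : i = j) (hi : i < L.length) :
    L[i]'hi = L[j]'(h ▸ hi) := by subst h; rfl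

lemma cnt_pos_pairs (L : List V) (i : ℕ) (h : i < L.length) :
    1 ≤ cnt L (L[i], L[(i + 1) % L.length]'(Nat.mod_lt _ (by omega))) := by
  have hm : (L[i], L[(i + 1) % L.length]'(Nat.mod_lt _ (by omega))) ∈ cpairs L := by
    rw [← getElem_cpairs L i h]
    exact List.getElem_mem _
  exact List.count_pos_iff.2 hm

/-- monotonicity of supportGraph -/
lemma reachable_of_mem (L : List V) (m : V × V → ℕ) (hle : ∀ p, cnt L p ≤ m p)
    {u v : V} (hu : u ∈ L) (hv : v ∈ L) : (supportGraph m).Reachable u v := by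
  have hlen : 0 < L.length := List.length_pos_iff.2 (List.ne_nil_of_mem hu)
  -- every element is reachable from L[0]
  have key : ∀ i (hi : i < L.length), (supportGraph m).Reachable (L[0]'hlen) (L[i]'hi) := by
    intro i
    induction i with
    | zero => intro _; exact SimpleGraph.Reachable.refl _
    | succ j ih =>
      intro hj
      have hj' : j < L.length := by omega
      refine (ih hj').trans ?_
      have hc := cnt_pos_pairs L j hj'
      rw [getElem_idx_congr L (Nat.mod_eq_of_lt hj) (Nat.mod_lt _ (by omega))] at hc
      by_cases he : L[j]'hj' = L[j+1]'hj
      · rw [he]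
      · exact SimpleGraph.Adj.reachable ⟨he, by have := hle (L[j]'hj', L[j+1]'hj); omega⟩
  obtain ⟨⟨i, hi⟩, rfl⟩ := List.mem_iff_get.1 hu
  obtain ⟨⟨j, hj⟩, rfl⟩ := List.mem_iff_get.1 hv
  exact ((key i hi).symm.trans (key j hj))

lemma count_beq_irrel {α : Type*} (inst1 inst2 : BEq α)
    (h1 : ∀ a b : α, (@BEq.beq α inst1 a b = true) ↔ a = b)
    (h2 : ∀ a b : α, (@BEq.beq α inst2 a b = true) ↔ a = b)
    (l : List α) (a : α) :
    @List.count α inst1 a l = @List.count α inst2 a l := by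
  simp only [List.count]
  apply List.countP_congr
  intro b _
  by_cases h : b = a
  · rw [(h1 b a).2 h, (h2 b a).2 h]
  · rw [show (@BEq.beq α inst1 b a) = false by
      cases hx : @BEq.beq α inst1 b a
      · rfl
      · exact absurd ((h1 b a).1 hx) h]
    rw [show (@BEq.beq α inst2 b a) = false by
      cases hx : @BEq.beq α inst2 b a
      · rfl
      · exact absurd ((h2 b a).1 hx) h]

lemma exists_cycle (m : V × V → ℕ)
    (bal : ∀ v : V, ∑ w : V, m (v, w) = ∑ w : V, m (w, v))
    (hm : ∃ p, 1 ≤ m p) :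
    ∃ C : List V, C ≠ [] ∧ ∀ p, cnt C p ≤ m p := by
  classical
  obtain ⟨p₀, hp₀⟩ := hm
  set v₀ := p₀.1 with hv₀
  -- the stepping function
  have exists_succ : ∀ v : V, 1 ≤ ∑ w : V, m (v, w) → ∃ w, 1 ≤ m (v, w) := by
    intro v h
    by_contra hc
    push_neg at hc
    have : ∑ w : V, m (v, w) = 0 := Finset.sum_eq_zero (fun w _ => by have := hc w; omega)
    omega
  set step : V → V := fun v => if h : ∃ w, 1 ≤ m (v, w) then h.choose else v₀ with hstep
  set f : ℕ → V := fun n => step^[n] v₀ with hf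
  have hout0 : 1 ≤ ∑ w : V, m (v₀, w) := by
    refine le_trans hp₀ ?_
    have := Finset.single_le_sum (f := fun w => m (v₀, w)) (fun w _ => Nat.zero_le _)
      (Finset.mem_univ p₀.2)
    simpa [hv₀] using this
  have hdeg : ∀ n, 1 ≤ ∑ w : V, m (f n, w) := by
    intro n
    induction n with
    | zero => simpa [hf] using hout0
    | succ j ih =>
      have hex : ∃ w, 1 ≤ m (f j, w) := exists_succ _ ih
      have hfj : f (j + 1) = step (f j) := by
        simp [hf, Function.iterate_succ_apply']
      have hedge : 1 ≤ m (f j, f (j + 1)) := by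
        rw [hfj, hstep]
        simp only [dif_pos hex]
        exact hex.choose_spec
      have hin : 1 ≤ ∑ w : V, m (w, f (j + 1)) :=
        le_trans hedge (Finset.single_le_sum (f := fun w => m (w, f (j + 1)))
          (fun w _ => Nat.zero_le _) (Finset.mem_univ (f j)))
      rw [bal]
      exact hin
  have hedge : ∀ n, 1 ≤ m (f n, f (n + 1)) := by
    intro n
    have hex : ∃ w, 1 ≤ m (f n, w) := exists_succ _ (hdeg n)
    have hfj : f (n + 1) = step (f n) := by
      simp [hf, Function.iterate_succ_apply']
    rw [hfj, hstep]
    simp only [dif_pos hex]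
    exact hex.choose_spec
  -- find first repeat
  obtain ⟨a, b, hab, hfab⟩ := Finite.exists_ne_map_eq_of_infinite f
  have hQ : ∃ j, ∃ i, i < j ∧ f i = f j := by
    rcases Nat.lt_or_ge a b with h | h
    · exact ⟨b, a, h, hfab⟩
    · exact ⟨a, b, lt_of_le_of_ne h (Ne.symm hab), hfab.symm⟩
  set j := Nat.find hQ with hj
  obtain ⟨i, hij, hfij⟩ := Nat.find_spec hQ
  have hmin : ∀ j' < j, ¬ ∃ i', i' < j' ∧ f i' = f j' := fun j' h => Nat.find_min hQ h
  have hinj : ∀ i1 i2, i1 < i2 → i2 < j → f i1 ≠ f i2 := by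
    intro i1 i2 h12 h2j hc
    exact hmin i2 h2j ⟨i1, h12, hc⟩
  set n := j - i with hn
  have hnpos : 1 ≤ n := by omega
  set C : List V := (List.range n).map (fun t => f (i + t)) with hC
  have hlen : C.length = n := by simp [hC]
  have hCelem : ∀ s (hs : s < n), C[s]'(by omega) = f (i + s) := by
    intro s hs
    simp [hC]
  refine ⟨C, by simp [hC]; omega, ?_⟩
  -- C is nodup
  have hCnodup : C.Nodup := by
    rw [hC]
    refine List.Nodup.map_on ?_ List.nodup_range
    intro t1 h1 t2 h2 he
    simp only [List.mem_range] at h1 h2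
    by_contra hne
    rcases Nat.lt_or_ge t1 t2 with h | h
    · exact hinj (i + t1) (i + t2) (by omega) (by omega) he
    · exact hinj (i + t2) (i + t1) (by omega) (by omega) he.symm
  have hPnodup : (cpairs C).Nodup := List.Nodup.of_map Prod.fst (by rwa [map_fst_cpairs])
  -- every cyclic pair of C is an edge of m
  have hmem : ∀ p ∈ cpairs C, 1 ≤ m p := by
    intro p hp
    obtain ⟨s, hs, hps⟩ := List.mem_iff_getElem.1 hp
    have hs' : s < n := by
      have := length_cpairs C
      omega
    rw [getElem_cpairs C s (by omega)] at hps
    have h1 : C[s]'(by omega) = f (i + s) := hCelem s hs'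
    have h2 : C[(s + 1) % C.length]'(Nat.mod_lt _ (by omega)) = f (i + s + 1) := by
      rcases Nat.lt_or_ge (s + 1) n with h | h
      · rw [getElem_idx_congr C (show (s+1) % C.length = s+1 by rw [hlen]; exact Nat.mod_eq_of_lt h)]
        rw [hCelem (s+1) h]
        all_goals (congr 1 <;> omega)
      · have hsn : s + 1 = n := by omega
        rw [getElem_idx_congr C (show (s+1) % C.length = 0 by rw [hlen, hsn]; simp)]
        rw [hCelem 0 (by omega)]
        have : i + s + 1 = j := by omega
        rw [this, ← hfij]
        all_goals (congr 1 <;> omega)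
    rw [← hps, h1, h2]
    exact hedge (i + s)
  intro p
  by_cases hp : p ∈ cpairs C
  · have h1 : cnt C p ≤ 1 := by
      rw [show cnt C p = (cpairs C).count p from rfl,
        count_beq_irrel instBEqProd instBEqOfDecidableEq (fun a b => @beq_iff_eq _ instBEqProd Prod.instLawfulBEq a b)
          (fun a b => @beq_iff_eq _ instBEqOfDecidableEq instLawfulBEq a b)]
      exact (count_beq_irrel instBEqProd instBEqOfDecidableEq (fun a b => @beq_iff_eq _ instBEqProd Prod.instLawfulBEq a b) (fun a b => @beq_iff_eq _ instBEqOfDecidableEq instLawfulBEq a b) (cpairs C) p).symm.trans_le (List.nodup_iff_count_le_one.1 hPnodup p)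
    exact le_trans h1 (hmem p hp)
  · simp [cnt, List.count_eq_zero_of_not_mem hp]


lemma decomp : ∀ n (m : V × V → ℕ), (∑ p : V × V, m p) = n →
    (∀ v : V, ∑ w : V, m (v, w) = ∑ w : V, m (w, v)) →
    ∃ Cs : List (List V), (∀ C ∈ Cs, C ≠ []) ∧
      ∀ p, (Cs.map (fun C => cnt C p)).sum = m p := by
  intro n
  induction n using Nat.strong_induction_on with
  | _ n ih =>
    intro m htot bal
    by_cases hz : ∀ p, m p = 0
    · exact ⟨[], by simp, fun p => by simp [hz]⟩
    · push_neg at hz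
      obtain ⟨p₀, hp₀⟩ := hz
      obtain ⟨C, hCne, hCle⟩ := exists_cycle m bal ⟨p₀, by omega⟩
      set m' : V × V → ℕ := fun p => m p - cnt C p with hm'
      have hsub : ∀ s : Finset (V × V), ∑ p ∈ s, m' p = ∑ p ∈ s, m p - ∑ p ∈ s, cnt C p :=
        fun s => Finset.sum_tsub_distrib s (fun p _ => hCle p)
      have hClen : 1 ≤ C.length := List.length_pos_iff.2 hCne
      have hCtot : ∑ p : V × V, cnt C p = C.length := cnt_total C
      have hle_tot : C.length ≤ n := by
        rw [← hCtot, ← htot]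
        exact Finset.sum_le_sum (fun p _ => hCle p)
      have htot' : ∑ p : V × V, m' p = n - C.length := by
        rw [hsub, htot, hCtot]
      have bal' : ∀ v : V, ∑ w : V, m' (v, w) = ∑ w : V, m' (w, v) := by
        intro v
        have h1 : ∑ w : V, m' (v, w) = ∑ w : V, m (v, w) - ∑ w : V, cnt C (v, w) :=
          Finset.sum_tsub_distrib _ (fun w _ => hCle (v, w))
        have h2 : ∑ w : V, m' (w, v) = ∑ w : V, m (w, v) - ∑ w : V, cnt C (w, v) :=
          Finset.sum_tsub_distrib _ (fun w _ => hCle (w, v))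
        rw [h1, h2, bal v, cnt_out, cnt_in]
      obtain ⟨Cs, h1, h2⟩ := ih (n - C.length) (by omega) m' htot' bal'
      refine ⟨C :: Cs, ?_, ?_⟩
      · intro D hD
        rcases List.mem_cons.1 hD with h | h
        · rw [h]; exact hCne
        · exact h1 D h
      · intro p
        have := h2 p
        simp only [List.map_cons, List.sum_cons, this, hm']
        have := hCle p
        omega

lemma exists_cons_rotation (A : List V) (a : V) (ha : a ∈ A) :
    ∃ A₂ : List V, cnt A = cnt (a :: A₂) := by
  set k := A.idxOf a with hk
  have hkl : k < A.length := List.idxOf_lt_length_iff.2 ha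
  have hrot := cnt_rotate A k
  have hlen : (A.rotate k).length = A.length := by simp
  have hhead : (A.rotate k)[0]'(by omega) = a := by
    rw [List.getElem_rotate]
    have : (0 + k) % A.length = k := by
      rw [Nat.zero_add]
      exact Nat.mod_eq_of_lt hkl
    rw [getElem_idx_congr A this]
    exact List.getElem_idxOf hkl
  rcases hAr : A.rotate k with _ | ⟨b, t⟩
  · exfalso
    rw [hAr] at hlen
    simp at hlen
    omega
  · refine ⟨t, ?_⟩
    rw [hAr] at hrot
    simp only [hAr, List.getElem_cons_zero] at hhead
    subst hhead
    exact hrot.symm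

lemma merge : ∀ N (A : List V) (Cs : List (List V)), Cs.length = N → A ≠ [] →
    (∀ C ∈ Cs, C ≠ []) →
    (supportGraph (fun p => cnt A p + (Cs.map (fun C => cnt C p)).sum)).Connected →
    ∃ B : List V, B ≠ [] ∧
      ∀ p, cnt B p = cnt A p + (Cs.map (fun C => cnt C p)).sum := by
  intro N
  induction N with
  | zero =>
    intro A Cs hlen hA _ _
    have : Cs = [] := List.length_eq_zero_iff.1 hlen
    subst this
    exact ⟨A, hA, fun p => by simp⟩
  | succ N ih =>
    intro A Cs hlen hA hCs hconn
    have hCsne : Cs ≠ [] := by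
      intro h; rw [h] at hlen; simp at hlen
    -- find C ∈ Cs sharing a vertex with A
    have hshare : ∃ C ∈ Cs, ∃ a, a ∈ A ∧ a ∈ C := by
      by_contra hex
      push_neg at hex
      obtain ⟨C₀, hC₀⟩ := List.exists_mem_of_ne_nil Cs hCsne
      have hC₀ne : C₀ ≠ [] := hCs C₀ hC₀
      obtain ⟨w, hw⟩ := List.exists_mem_of_ne_nil C₀ hC₀ne
      have hwA : w ∉ A := fun hwa => hex C₀ hC₀ w hwa hw
      obtain ⟨u₀, hu₀⟩ := List.exists_mem_of_ne_nil A hA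
      obtain ⟨walk⟩ := hconn.preconnected u₀ w
      obtain ⟨dart, _, hd1, hd2⟩ := walk.exists_boundary_dart {v | v ∈ A} hu₀ hwA
      have hadj := dart.adj
      have hcard : 1 ≤ (cnt A (dart.toProd.1, dart.toProd.2) +
          (Cs.map (fun C => cnt C (dart.toProd.1, dart.toProd.2))).sum) +
          (cnt A (dart.toProd.2, dart.toProd.1) +
          (Cs.map (fun C => cnt C (dart.toProd.2, dart.toProd.1))).sum) := hadj.2
      have hA1 : cnt A (dart.toProd.1, dart.toProd.2) = 0 := by
        by_contra h
        have := mem_of_cnt_pos A (dart.toProd.1, dart.toProd.2) (by omega)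
        exact hd2 this.2
      have hA2 : cnt A (dart.toProd.2, dart.toProd.1) = 0 := by
        by_contra h
        have := mem_of_cnt_pos A (dart.toProd.2, dart.toProd.1) (by omega)
        exact hd2 this.1
      have hpos : 1 ≤ (Cs.map (fun C => cnt C (dart.toProd.1, dart.toProd.2))).sum +
          (Cs.map (fun C => cnt C (dart.toProd.2, dart.toProd.1))).sum := by
        omega
      have : ∃ C ∈ Cs, 1 ≤ cnt C (dart.toProd.1, dart.toProd.2) ∨
          1 ≤ cnt C (dart.toProd.2, dart.toProd.1) := by
        by_contra hc
        push_neg at hc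
        have z1 : (Cs.map (fun C => cnt C (dart.toProd.1, dart.toProd.2))).sum = 0 := by
          apply List.sum_eq_zero
          intro x hx
          obtain ⟨C, hC, rfl⟩ := List.mem_map.1 hx
          have := hc C hC
          omega
        have z2 : (Cs.map (fun C => cnt C (dart.toProd.2, dart.toProd.1))).sum = 0 := by
          apply List.sum_eq_zero
          intro x hx
          obtain ⟨C, hC, rfl⟩ := List.mem_map.1 hx
          have := hc C hC
          omega
        omega
      obtain ⟨C, hC, hCpos⟩ := this
      rcases hCpos with h | h
      · exact hex C hC dart.toProd.1 hd1 (mem_of_cnt_pos C _ h).1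
      · exact hex C hC dart.toProd.1 hd1 (mem_of_cnt_pos C _ h).2
    obtain ⟨C, hCmem, a, haA, haC⟩ := hshare
    obtain ⟨A₂, hA₂⟩ := exists_cons_rotation A a haA
    obtain ⟨C₂, hC₂⟩ := exists_cons_rotation C a haC
    set B₀ : List V := (a :: A₂) ++ (a :: C₂) with hB₀
    have hB₀cnt : ∀ p, cnt B₀ p = cnt A p + cnt C p := by
      intro p
      rw [hB₀]
      have := congrFun (cnt_splice a A₂ C₂) p
      rw [this, ← hA₂, ← hC₂]
    obtain ⟨l1, l2, hsplit⟩ := List.append_of_mem hCmem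
    set Cs' : List (List V) := l1 ++ l2 with hCs'
    have herase_len : Cs'.length = N := by
      rw [hsplit] at hlen
      simp only [hCs', List.length_append, List.length_cons] at hlen ⊢
      omega
    have hsum_erase : ∀ p, cnt C p + (Cs'.map (fun C' => cnt C' p)).sum =
        (Cs.map (fun C' => cnt C' p)).sum := by
      intro p
      rw [hsplit]
      simp only [hCs', List.map_append, List.map_cons, List.sum_append, List.sum_cons]
      omega
    have hfun : (fun p => cnt B₀ p + (Cs'.map (fun C' => cnt C' p)).sum) =
        (fun p => cnt A p + (Cs.map (fun C' => cnt C' p)).sum) := by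
      funext p
      rw [hB₀cnt p]
      have := hsum_erase p
      omega
    obtain ⟨B, hBne, hBcnt⟩ := ih B₀ Cs' herase_len (by simp [hB₀])
      (fun C' hC' => hCs C' (by
        rw [hsplit]
        rcases List.mem_append.1 hC' with h | h
        · exact List.mem_append.2 (Or.inl h)
        · exact List.mem_append.2 (Or.inr (List.mem_cons_of_mem _ h))))
      (by rw [hfun]; exact hconn)
    refine ⟨B, hBne, fun p => ?_⟩
    rw [hBcnt p, hB₀cnt p]
    have := hsum_erase p
    omega

end TourAux
namespace TourAux

lemma cost_eq (L : List V) (d : V × V → ℕ) :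
    ∑ p : V × V, d p * cnt L p = ((cpairs L).map d).sum := by
  rw [← sum_count_mul (cpairs L) d]
  apply Finset.sum_congr rfl
  intro p _
  congr 1
  exact count_beq_irrel instBEqProd instBEqOfDecidableEq
    (fun a b => @beq_iff_eq _ instBEqProd Prod.instLawfulBEq a b)
    (fun a b => @beq_iff_eq _ instBEqOfDecidableEq instLawfulBEq a b) (cpairs L) p

end TourAux


open TourAux in
/-- For a nonempty finite set `V`, demands `k : V → ℕ` with `k v ≥ 1`,
costs `d : V × V → ℕ`, `ℓ = ∑ v, k v` and `c : ℕ`: there is a cyclic sequence of length `ℓ`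
in which each `v` appears exactly `k v` times and whose total cost is `c`, iff there is a
multiplicity function `m` whose out- and in-degrees at each `v` equal `k v`, whose undirected
support graph is connected on all of `V`, and whose cost is `c`. -/
theorem tour_iff_connected_multiplicity
    [Nonempty V] (k : V → ℕ) (hk : ∀ v : V, 1 ≤ k v) (d : V × V → ℕ)
    (ℓ : ℕ) (hℓ : ℓ = ∑ v : V, k v) (c : ℕ) :
    (∃ x : ℕ → V,
      (∀ v : V, ((Finset.range ℓ).filter (fun i => x i = v)).card = k v) ∧
      ∑ i ∈ Finset.range ℓ, d (x i, x ((i + 1) % ℓ)) = c)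
    ↔
    (∃ m : V × V → ℕ,
      (∀ v : V, ∑ w : V, m (v, w) = k v) ∧
      (∀ v : V, ∑ w : V, m (w, v) = k v) ∧
      (supportGraph m).Connected ∧
      ∑ p : V × V, d p * m p = c) := by
  classical
  have hℓpos : 0 < ℓ := by
    obtain ⟨v₀⟩ := (inferInstance : Nonempty V)
    have h1 := hk v₀
    have h2 := Finset.single_le_sum (f := k) (fun v _ => Nat.zero_le _) (Finset.mem_univ v₀)
    omega
  constructor
  · rintro ⟨x, hcount, hcost⟩
    set A : List V := (List.range ℓ).map x with hA
    have hAlen : A.length = ℓ := by simp [hA]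
    have hgetE : ∀ (i : ℕ) (hi : i < A.length), A[i]'hi = x i := by
      intro i hi
      simp [hA]
    have hAcount : ∀ v : V, A.count v = k v := by
      intro v
      rw [count_eq_card_filter_getD A (x 0) v, ← hcount v, hAlen]
      apply Finset.card_bij (fun i _ => i)
      · intro i hi
        simp only [Finset.mem_filter, Finset.mem_range] at hi ⊢
        refine ⟨hi.1, ?_⟩
        rw [← hi.2, List.getD_eq_getElem _ _ (by omega), hgetE]
      · intro i hi j hj h
        exact h
      · intro i hi
        simp only [Finset.mem_filter, Finset.mem_range] at hi ⊢
        refine ⟨i, ⟨hi.1, ?_⟩, rfl⟩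
        rw [← hi.2, List.getD_eq_getElem _ _ (by omega), hgetE]
    refine ⟨cnt A, ?_, ?_, ?_, ?_⟩
    · intro v
      rw [cnt_out, hAcount]
    · intro v
      rw [cnt_in, hAcount]
    · constructor
      intro u v
      have hu : u ∈ A := by
        rw [← List.count_pos_iff]
        rw [hAcount u]
        exact hk u
      have hv : v ∈ A := by
        rw [← List.count_pos_iff]
        rw [hAcount v]
        exact hk v
      exact reachable_of_mem A (cnt A) (fun p => le_refl _) hu hv
    · rw [cost_eq, ← sum_getD_map (cpairs A) (x 0, x 0) d, length_cpairs, hAlen, ← hcost]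
      apply Finset.sum_congr rfl
      intro i hi
      have hi' : i < ℓ := Finset.mem_range.1 hi
      congr 1
      rw [List.getD_eq_getElem _ _ (by rw [length_cpairs, hAlen]; omega)]
      rw [getElem_cpairs A i (by omega)]
      rw [hgetE i (by omega)]
      have hmod : (i + 1) % A.length < A.length := Nat.mod_lt _ (by omega)
      rw [hgetE ((i + 1) % A.length) hmod]
      rw [hAlen]
  · rintro ⟨m, hout, hin, hconn, hcost⟩
    have bal : ∀ v : V, ∑ w : V, m (v, w) = ∑ w : V, m (w, v) := fun v => by
      rw [hout v, hin v]
    have htot : ∑ p : V × V, m p = ℓ := by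
      rw [Fintype.sum_prod_type, hℓ]
      exact Finset.sum_congr rfl (fun v _ => hout v)
    obtain ⟨Cs, hCsne, hCs⟩ := decomp (∑ p : V × V, m p) m rfl bal
    cases Cs with
    | nil =>
      exfalso
      have : ∀ p, m p = 0 := fun p => by simpa using (hCs p).symm
      rw [Finset.sum_congr rfl (fun p _ => this p)] at htot
      simp at htot
      omega
    | cons A₀ Cs' =>
      have hCs' : ∀ p, cnt A₀ p + (Cs'.map (fun C => cnt C p)).sum = m p := by
        intro p
        have := hCs p
        simpa using this
      have hconn' : (supportGraph
          (fun p => cnt A₀ p + (Cs'.map (fun C => cnt C p)).sum)).Connected := by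
        have he : (fun p => cnt A₀ p + (Cs'.map (fun C => cnt C p)).sum) = m :=
          funext hCs'
        rw [he]
        exact hconn
      obtain ⟨B, hBne, hBcnt⟩ := merge Cs'.length A₀ Cs' rfl
        (hCsne A₀ List.mem_cons_self)
        (fun C hC => hCsne C (List.mem_cons_of_mem _ hC)) hconn'
      have hBm : ∀ p, cnt B p = m p := fun p => by rw [hBcnt p]; exact hCs' p
      have hBlen : B.length = ℓ := by
        rw [← cnt_total B, Finset.sum_congr rfl (fun p _ => hBm p), htot]
      have hBcount : ∀ v : V, B.count v = k v := by
        intro v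
        rw [← cnt_out B v, Finset.sum_congr rfl (fun w _ => hBm (v, w)), hout v]
      obtain ⟨v₀⟩ := (inferInstance : Nonempty V)
      refine ⟨fun i => B.getD i v₀, ?_, ?_⟩
      · intro v
        have := count_eq_card_filter_getD B v₀ v
        rw [hBlen] at this
        rw [← this]
        exact hBcount v
      · have e1 : ∑ p : V × V, d p * m p = ((cpairs B).map d).sum := by
          rw [← cost_eq]
          exact Finset.sum_congr rfl (fun p _ => by rw [hBm p])
        have e2 : ∑ i ∈ Finset.range ℓ, d ((cpairs B).getD i (v₀, v₀)) =
            ∑ i ∈ Finset.range ℓ, d (B.getD i v₀, B.getD ((i + 1) % ℓ) v₀) := by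
          apply Finset.sum_congr rfl
          intro i hi
          have hi' : i < ℓ := Finset.mem_range.1 hi
          congr 1
          rw [List.getD_eq_getElem _ _ (by rw [length_cpairs, hBlen]; omega)]
          rw [getElem_cpairs B i (by omega)]
          rw [List.getD_eq_getElem B v₀ (by omega)]
          have hmod : (i + 1) % ℓ < ℓ := Nat.mod_lt _ (by omega)
          rw [List.getD_eq_getElem B v₀ (by omega)]
          rw [getElem_idx_congr B (show (i + 1) % B.length = (i + 1) % ℓ by rw [hBlen])]
        have e3 : ((cpairs B).map d).sum =
            ∑ i ∈ Finset.range ℓ, d ((cpairs B).getD i (v₀, v₀)) := by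
          rw [← sum_getD_map (cpairs B) (v₀, v₀) d, length_cpairs, hBlen]
        rw [← e2, ← e3, ← e1, hcost]
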